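/- arXiv:1304.0444 — 2 statements merged into one kernel-verified Lean document; each statement's English description precedes it below -/
import Mathlib

section
/- Let f be a complex polynomial of degree n, all of whose zeros lie in the closed unit disk with at least one zero strictly inside. Then for every complex α with |α| ≤ 1 and every R > r ≥ 1, for all z with |z| = 1: |f(Rz) − α f(rz)| > (((R+1)/(r+1))^n − |α|) · |f(rz)|. -/
open Polynomial Complex

/-- Squared form of the key inequality. -/
lemma sq_key (R r : ℝ) (hr : 1 ≤ r) (hRr : r < R) (z w : ℂ) (hz : ‖z‖ = 1) :
    (r+1)^2 * (‖(R:ℂ)*z - w‖)^2 - (R+1)^2 * (‖(r:ℂ)*z - w‖)^2 =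
      (R - r) * ((1 - (w.re^2 + w.im^2)) * (R + r + 2)
        + 2 * (r*R - 1) * (1 + (z.re*w.re + z.im*w.im))) := by
  have hz2 : z.re^2 + z.im^2 = 1 := by
    have := Complex.sq_norm z
    rw [hz] at this
    simpa [Complex.normSq_apply, sq] using this.symm
  have eA : (‖(r:ℂ)*z - w‖)^2 = (r*z.re - w.re)^2 + (r*z.im - w.im)^2 := by
    rw [Complex.sq_norm]; simp [Complex.normSq_apply, sq]
  have eB : (‖(R:ℂ)*z - w‖)^2 = (R*z.re - w.re)^2 + (R*z.im - w.im)^2 := by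
    rw [Complex.sq_norm]; simp [Complex.normSq_apply, sq]
  rw [eA, eB]
  linear_combination ((r+1)^2*R^2 - (R+1)^2*r^2) * hz2

lemma t_bounds (z w : ℂ) (hz : ‖z‖ = 1) (hw : ‖w‖ ≤ 1) :
    w.re^2 + w.im^2 ≤ 1 ∧ -1 ≤ z.re*w.re + z.im*w.im := by
  have hz2 : z.re^2 + z.im^2 = 1 := by
    have := Complex.sq_norm z
    rw [hz] at this
    simpa [Complex.normSq_apply, sq] using this.symm
  have hw2 : w.re^2 + w.im^2 ≤ 1 := by
    have h1 := Complex.sq_norm w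
    have h2 : (‖w‖)^2 ≤ 1 := by nlinarith [norm_nonneg w]
    rw [h1] at h2
    simpa [Complex.normSq_apply, sq] using h2
  refine ⟨hw2, ?_⟩
  nlinarith [sq_nonneg (z.re + w.re), sq_nonneg (z.im + w.im)]

lemma key_le (R r : ℝ) (hr : 1 ≤ r) (hRr : r < R) (z w : ℂ) (hz : ‖z‖ = 1)
    (hw : ‖w‖ ≤ 1) :
    (R+1) * ‖(r:ℂ)*z - w‖ ≤ (r+1) * ‖(R:ℂ)*z - w‖ := by
  obtain ⟨hs, ht⟩ := t_bounds z w hz hw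
  have hid := sq_key R r hr hRr z w hz
  have hrR : 1 ≤ r * R := by nlinarith
  have hA := norm_nonneg ((r:ℂ)*z - w)
  have hB := norm_nonneg ((R:ℂ)*z - w)
  have hbr : 0 ≤ (1 - (w.re^2 + w.im^2)) * (R + r + 2)
      + 2 * (r*R - 1) * (1 + (z.re*w.re + z.im*w.im)) := by
    have h1 := mul_nonneg (sub_nonneg.2 hs) (by nlinarith : (0:ℝ) ≤ R + r + 2)
    have h2 := mul_nonneg (by nlinarith : (0:ℝ) ≤ 2*(r*R - 1))
      (by nlinarith : (0:ℝ) ≤ 1 + (z.re*w.re + z.im*w.im))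
    linarith
  have hsq : ((R+1)*‖(r:ℂ)*z - w‖)^2 ≤ ((r+1)*‖(R:ℂ)*z - w‖)^2 := by
    have := mul_nonneg (by linarith : (0:ℝ) ≤ R - r) hbr
    nlinarith [hid]
  exact le_of_pow_le_pow_left₀ two_ne_zero (by positivity) hsq

lemma key_lt (R r : ℝ) (hr : 1 ≤ r) (hRr : r < R) (z w : ℂ) (hz : ‖z‖ = 1)
    (hw : ‖w‖ < 1) :
    (R+1) * ‖(r:ℂ)*z - w‖ < (r+1) * ‖(R:ℂ)*z - w‖ := by
  obtain ⟨_, ht⟩ := t_bounds z w hz hw.le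
  have hs : w.re^2 + w.im^2 < 1 := by
    have h1 := Complex.sq_norm w
    have h2 : (‖w‖)^2 < 1 := by nlinarith [norm_nonneg w]
    rw [h1] at h2
    simpa [Complex.normSq_apply, sq] using h2
  have hid := sq_key R r hr hRr z w hz
  have hrR : 1 ≤ r * R := by nlinarith
  have hA := norm_nonneg ((r:ℂ)*z - w)
  have hB := norm_nonneg ((R:ℂ)*z - w)
  have hbr : 0 < (1 - (w.re^2 + w.im^2)) * (R + r + 2)
      + 2 * (r*R - 1) * (1 + (z.re*w.re + z.im*w.im)) := by
    have h1 := mul_pos (by nlinarith : (0:ℝ) < 1 - (w.re^2 + w.im^2))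
      (by nlinarith : (0:ℝ) < R + r + 2)
    have h2 := mul_nonneg (by nlinarith : (0:ℝ) ≤ 2*(r*R - 1))
      (by nlinarith : (0:ℝ) ≤ 1 + (z.re*w.re + z.im*w.im))
    linarith
  have hsq : ((R+1)*‖(r:ℂ)*z - w‖)^2 < ((r+1)*‖(R:ℂ)*z - w‖)^2 := by
    have := mul_pos (by linarith : (0:ℝ) < R - r) hbr
    nlinarith [hid]
  exact lt_of_pow_lt_pow_left₀ 2 (by positivity) hsq

lemma ms_prod_le (M : Multiset ℂ) (F G : ℂ → ℝ) (h0 : ∀ w ∈ M, 0 ≤ F w)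
    (h : ∀ w ∈ M, F w ≤ G w) : (M.map F).prod ≤ (M.map G).prod := by
  induction M using Multiset.induction with
  | empty => simp
  | cons a s ih =>
    simp only [Multiset.map_cons, Multiset.prod_cons]
    have hF0 : ∀ w ∈ s, 0 ≤ F w := fun w hw => h0 w (Multiset.mem_cons_of_mem hw)
    have hFa : 0 ≤ F a := h0 a (Multiset.mem_cons_self a s)
    have hprodF : 0 ≤ (s.map F).prod :=
      Multiset.prod_nonneg (by intro x hx; obtain ⟨w, hw, rfl⟩ := Multiset.mem_map.mp hx; exact hF0 w hw)
    exact mul_le_mul (h a (Multiset.mem_cons_self a s))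
      (ih hF0 (fun w hw => h w (Multiset.mem_cons_of_mem hw))) hprodF
      (le_trans hFa (h a (Multiset.mem_cons_self a s)))

theorem stmt_4 (f : Polynomial ℂ) (n : ℕ) (hdeg : f.natDegree = n)
    (hroots : ∀ w : ℂ, f.eval w = 0 → ‖w‖ ≤ 1)
    (hinner : ∃ w : ℂ, f.eval w = 0 ∧ ‖w‖ < 1)
    (α : ℂ) (hα : ‖α‖ ≤ 1)
    (R r : ℝ) (hr : 1 ≤ r) (hRr : r < R) (z : ℂ) (hz : ‖z‖ = 1) :
    (((R + 1) / (r + 1)) ^ n - ‖α‖) * ‖f.eval ((r : ℂ) * z)‖ <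
      ‖f.eval ((R : ℂ) * z) - α * f.eval ((r : ℂ) * z)‖ := by
  have hfne : f ≠ 0 := by
    intro h
    have := hroots 2 (by simp [h])
    norm_num at this
  have hR1 : (1:ℝ) < R := lt_of_le_of_lt hr hRr
  have hfR : f.eval ((R:ℂ)*z) ≠ 0 := by
    intro h
    have := hroots _ h
    rw [norm_mul, Complex.norm_real, hz, mul_one, Real.norm_eq_abs, abs_of_pos (by linarith)] at this
    linarith
  by_cases hfr : f.eval ((r:ℂ)*z) = 0
  · rw [hfr]
    simp only [map_zero, norm_zero, mul_zero, sub_zero]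
    exact (norm_pos_iff.mpr hfR)
  -- main case
  have hcard : f.roots.card = n := by
    rw [← hdeg]
    exact Polynomial.splits_iff_card_roots.mp (IsAlgClosed.splits f)
  have heval : ∀ x : ℂ, f.eval x = f.leadingCoeff * (f.roots.map (fun a => x - a)).prod := by
    intro x
    conv_lhs => rw [(IsAlgClosed.splits f).eq_prod_roots]
    rw [eval_mul, eval_C, Polynomial.eval_multiset_prod, Multiset.map_map]
    simp
  have habs : ∀ x : ℂ, ‖f.eval x‖ =
      ‖f.leadingCoeff‖ * (f.roots.map (fun a => ‖x - a‖)).prod := by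
    intro x
    rw [heval x, norm_mul]
    exact congrArg _ ((map_multiset_prod (normHom : ℂ →*₀ ℝ) _).trans (by rw [Multiset.map_map]; rfl))
  set M := f.roots with hM
  obtain ⟨w0, hw0eval, hw0lt⟩ := hinner
  have hw0M : w0 ∈ M := by rw [hM, Polynomial.mem_roots hfne]; exact hw0eval
  obtain ⟨M', hM'⟩ := Multiset.exists_cons_of_mem hw0M
  -- all roots in closed disk
  have hball : ∀ w ∈ M, ‖w‖ ≤ 1 := by
    intro w hw
    exact hroots w (Polynomial.isRoot_of_mem_roots hw)
  -- rz - w ≠ 0 for roots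
  have hrz : ∀ w ∈ M, 0 < ‖(r:ℂ)*z - w‖ := by
    intro w hw
    rw [norm_pos_iff, sub_ne_zero]
    intro h
    exact hfr (by rw [h]; exact Polynomial.isRoot_of_mem_roots hw)
  -- product inequality
  have hprod : (R+1)^n * (M.map (fun a => ‖(r:ℂ)*z - a‖)).prod <
      (r+1)^n * (M.map (fun a => ‖(R:ℂ)*z - a‖)).prod := by
    have hcardM' : M'.card = n - 1 := by
      have := hcard
      rw [hM'] at this
      simp only [Multiset.card_cons] at this
      omega
    have hn1 : 1 ≤ n := by
      have := hcard
      rw [hM'] at this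
      simp only [Multiset.card_cons] at this
      omega
    rw [hM']
    simp only [Multiset.map_cons, Multiset.prod_cons]
    have hrest : (M'.map (fun a => (R+1) * ‖(r:ℂ)*z - a‖)).prod ≤
        (M'.map (fun a => (r+1) * ‖(R:ℂ)*z - a‖)).prod := by
      apply ms_prod_le
      · intro w hw
        exact mul_nonneg (by linarith) (norm_nonneg _)
      · intro w hw
        exact key_le R r hr hRr z w hz (hball w (hM' ▸ Multiset.mem_cons_of_mem hw))
    have hrestL : (M'.map (fun a => (R+1) * ‖(r:ℂ)*z - a‖)).prod =
        (R+1)^(n-1) * (M'.map (fun a => ‖(r:ℂ)*z - a‖)).prod := by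
      rw [← hcardM']
      rw [Multiset.prod_map_mul]
      simp [Multiset.map_const', Multiset.prod_replicate]
    have hrestR : (M'.map (fun a => (r+1) * ‖(R:ℂ)*z - a‖)).prod =
        (r+1)^(n-1) * (M'.map (fun a => ‖(R:ℂ)*z - a‖)).prod := by
      rw [← hcardM']
      rw [Multiset.prod_map_mul]
      simp [Multiset.map_const', Multiset.prod_replicate]
    rw [hrestL, hrestR] at hrest
    have hkey0 := key_lt R r hr hRr z w0 hz hw0lt
    have hposL : 0 < (M'.map (fun a => ‖(r:ℂ)*z - a‖)).prod := by
      apply Multiset.prod_pos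
      intro x hx
      obtain ⟨w, hw, rfl⟩ := Multiset.mem_map.mp hx
      exact hrz w (hM' ▸ Multiset.mem_cons_of_mem hw)
    have hexp : ∀ c : ℝ, c^n = c * c^(n-1) := by
      intro c
      conv_lhs => rw [show n = 1 + (n-1) by omega]
      rw [pow_add, pow_one]
    rw [hexp (R+1), hexp (r+1)]
    calc (R+1) * (R+1)^(n-1) * (‖(r:ℂ)*z - w0‖ *
            (M'.map (fun a => ‖(r:ℂ)*z - a‖)).prod)
        = ((R+1) * ‖(r:ℂ)*z - w0‖) *
            ((R+1)^(n-1) * (M'.map (fun a => ‖(r:ℂ)*z - a‖)).prod) := by ring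
      _ < ((r+1) * ‖(R:ℂ)*z - w0‖) *
            ((r+1)^(n-1) * (M'.map (fun a => ‖(R:ℂ)*z - a‖)).prod) := by
          apply mul_lt_mul hkey0 hrest
          · exact mul_pos (pow_pos (by linarith) _) hposL
          · exact mul_nonneg (by linarith) (norm_nonneg _)
      _ = (r+1) * (r+1)^(n-1) * (‖(R:ℂ)*z - w0‖ *
            (M'.map (fun a => ‖(R:ℂ)*z - a‖)).prod) := by ring
  -- translate to |f|
  have hlc : 0 < ‖f.leadingCoeff‖ :=
    norm_pos_iff.mpr (Polynomial.leadingCoeff_ne_zero.mpr hfne)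
  have hmain : ((R+1)/(r+1))^n * ‖f.eval ((r:ℂ)*z)‖ <
      ‖f.eval ((R:ℂ)*z)‖ := by
    rw [habs, habs]
    rw [div_pow]
    rw [div_mul_eq_mul_div, div_lt_iff₀ (by positivity)]
    calc (R+1)^n * (‖f.leadingCoeff‖ *
            (M.map (fun a => ‖(r:ℂ)*z - a‖)).prod)
        = ‖f.leadingCoeff‖ *
            ((R+1)^n * (M.map (fun a => ‖(r:ℂ)*z - a‖)).prod) := by ring
      _ < ‖f.leadingCoeff‖ *
            ((r+1)^n * (M.map (fun a => ‖(R:ℂ)*z - a‖)).prod) := by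
          exact (mul_lt_mul_iff_right₀ hlc).mpr hprod
      _ = ‖f.leadingCoeff‖ *
            (M.map (fun a => ‖(R:ℂ)*z - a‖)).prod * (r+1)^n := by ring
  -- finish
  have htri : ‖f.eval ((R:ℂ)*z)‖ - ‖α‖ * ‖f.eval ((r:ℂ)*z)‖ ≤
      ‖f.eval ((R:ℂ)*z) - α * f.eval ((r:ℂ)*z)‖ := by
    have := norm_sub_norm_le (f.eval ((R:ℂ)*z)) (α * f.eval ((r:ℂ)*z))
    simp only [norm_mul] at this
    linarith
  have hBpos : 0 ≤ ‖f.eval ((r:ℂ)*z)‖ := norm_nonneg _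
  nlinarith [hmain, htri]
end

section
/- Let P be a complex polynomial of degree n with all zeros in the closed unit disk and m = min_{|z|=1}|P(z)|. For R > r ≥ 1, α, β ∈ ℂ with |α| ≤ 1, |β| ≤ 1, and φ = β(((R+1)/(r+1))^n − |α|) − α, for every |z| ≥ 1: |P(Rz) + φ P(rz)| ≥ |R^n + φ r^n| · |z|^n · m. -/
open Polynomial Complex

lemma factor_ineq (R r : ℝ) (hr : 1 ≤ r) (hRr : r ≤ R) (z w : ℂ)
    (hz : 1 ≤ ‖z‖) (hw : ‖w‖ ≤ 1) :
    (R + 1) * ‖(r:ℂ) * z - w‖ ≤ (r + 1) * ‖(R:ℂ) * z - w‖ := by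
  have h1 : 1 ≤ z.re ^ 2 + z.im ^ 2 := by
    have : (1:ℝ) ≤ ‖z‖ ^ 2 := by nlinarith [norm_nonneg z]
    rwa [Complex.sq_norm, Complex.normSq_apply, ← pow_two, ← pow_two] at this
  have h2 : w.re ^ 2 + w.im ^ 2 ≤ 1 := by
    have : ‖w‖ ^ 2 ≤ 1 := by nlinarith [norm_nonneg w]
    rwa [Complex.sq_norm, Complex.normSq_apply, ← pow_two, ← pow_two] at this
  have key : ((R + 1) * ‖(r:ℂ) * z - w‖) ^ 2 ≤
      ((r + 1) * ‖(R:ℂ) * z - w‖) ^ 2 := by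
    rw [mul_pow, mul_pow, Complex.sq_norm, Complex.sq_norm, Complex.normSq_apply,
      Complex.normSq_apply]
    simp only [Complex.sub_re, Complex.sub_im, Complex.mul_re, Complex.mul_im,
      Complex.ofReal_re, Complex.ofReal_im]
    ring_nf
    nlinarith [sq_nonneg ((z.re + w.re)), sq_nonneg (z.im + w.im),
      mul_nonneg (mul_nonneg (sub_nonneg.2 (by nlinarith : (1:ℝ) ≤ r * R))
        (add_nonneg (sq_nonneg (z.re + w.re)) (sq_nonneg (z.im + w.im))))
        (sub_nonneg.2 hRr),
      mul_nonneg (mul_nonneg (mul_nonneg (by linarith : (0:ℝ) ≤ r + 1) (by linarith : (0:ℝ) ≤ R + 1))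
        (by linarith [h1, h2] : (0:ℝ) ≤ z.re ^ 2 + z.im ^ 2 - (w.re ^ 2 + w.im ^ 2)))
        (sub_nonneg.2 hRr)]
  have hA : 0 ≤ (R + 1) * ‖(r:ℂ) * z - w‖ :=
    mul_nonneg (by linarith) (norm_nonneg _)
  have hB : 0 ≤ (r + 1) * ‖(R:ℂ) * z - w‖ :=
    mul_nonneg (by linarith) (norm_nonneg _)
  nlinarith [key, hA, hB]

lemma prod_factor_ineq (R r : ℝ) (hr : 1 ≤ r) (hRr : r ≤ R) (z : ℂ) (hz : 1 ≤ ‖z‖)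
    (s : Multiset ℂ) (hs : ∀ w ∈ s, ‖w‖ ≤ 1) :
    (R + 1) ^ Multiset.card s * (s.map (fun w => ‖(r:ℂ)*z - w‖)).prod ≤
    (r + 1) ^ Multiset.card s * (s.map (fun w => ‖(R:ℂ)*z - w‖)).prod := by
  induction s using Multiset.induction with
  | empty => simp
  | cons a t ih =>
    have ha : ‖a‖ ≤ 1 := hs a (Multiset.mem_cons_self a t)
    have ht : ∀ w ∈ t, ‖w‖ ≤ 1 := fun w hw => hs w (Multiset.mem_cons_of_mem hw)
    simp only [Multiset.card_cons, Multiset.map_cons, Multiset.prod_cons, pow_succ]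
    have h1 := factor_ineq R r hr hRr z a hz ha
    have h2 := ih ht
    have hprodr : (0:ℝ) ≤ (Multiset.map (fun w => ‖(r:ℂ)*z - w‖) t).prod :=
      Multiset.prod_nonneg (by intro x hx; obtain ⟨w, _, rfl⟩ := Multiset.mem_map.mp hx; exact norm_nonneg _)
    have hL : (0:ℝ) ≤ (R + 1) * ‖(r:ℂ)*z - a‖ :=
      mul_nonneg (by linarith) (norm_nonneg _)
    have hR : (0:ℝ) ≤ (r + 1) * ‖(R:ℂ)*z - a‖ :=
      mul_nonneg (by linarith) (norm_nonneg _)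
    calc (R + 1) ^ Multiset.card t * (R+1) * (‖(r:ℂ)*z - a‖ * (Multiset.map (fun w => ‖(r:ℂ)*z - w‖) t).prod)
        = ((R + 1) * ‖(r:ℂ)*z - a‖) * ((R + 1) ^ Multiset.card t * (Multiset.map (fun w => ‖(r:ℂ)*z - w‖) t).prod) := by ring
      _ ≤ ((r + 1) * ‖(R:ℂ)*z - a‖) * ((r + 1) ^ Multiset.card t * (Multiset.map (fun w => ‖(R:ℂ)*z - w‖) t).prod) := by
          apply mul_le_mul h1 h2 (mul_nonneg (pow_nonneg (by linarith) _) hprodr) hR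
      _ = (r + 1) ^ Multiset.card t * (r+1) * (‖(R:ℂ)*z - a‖ * (Multiset.map (fun w => ‖(R:ℂ)*z - w‖) t).prod) := by ring

lemma abs_eval_eq (F : Polynomial ℂ) (u : ℂ) :
    ‖F.eval u‖ =
      ‖F.leadingCoeff‖ * ((F.roots.map (fun w => ‖u - w‖)).prod) := by
  conv_lhs => rw [(IsAlgClosed.splits F).eq_prod_roots]
  rw [eval_mul, eval_C, norm_mul, eval_multiset_prod, Multiset.map_map, ← normHom_apply (Multiset.prod _), map_multiset_prod,
    Multiset.map_map]
  congr 1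
  apply congrArg
  apply Multiset.map_congr rfl
  intro a _
  simp

lemma claimA (F : Polynomial ℂ) (n : ℕ) (hdeg : F.natDegree = n) (hF : F ≠ 0)
    (hroots : ∀ w, F.eval w = 0 → ‖w‖ ≤ 1)
    (R r : ℝ) (hr : 1 ≤ r) (hRr : r ≤ R) (z : ℂ) (hz : 1 ≤ ‖z‖) :
    (R + 1) ^ n * ‖F.eval ((r:ℂ)*z)‖ ≤ (r + 1) ^ n * ‖F.eval ((R:ℂ)*z)‖ := by
  have hcard : Multiset.card F.roots = n := by
    rw [← hdeg]; exact splits_iff_card_roots.mp (IsAlgClosed.splits F)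
  have hmem : ∀ w ∈ F.roots, ‖w‖ ≤ 1 := fun w hw =>
    hroots w ((mem_roots hF).mp hw)
  have key := prod_factor_ineq R r hr hRr z hz F.roots hmem
  rw [hcard] at key
  rw [abs_eval_eq, abs_eval_eq]
  have hc : (0:ℝ) ≤ ‖F.leadingCoeff‖ := norm_nonneg _
  calc (R + 1) ^ n * (‖F.leadingCoeff‖ * (F.roots.map (fun w => ‖(r:ℂ)*z - w‖)).prod)
      = ‖F.leadingCoeff‖ * ((R + 1) ^ n * (F.roots.map (fun w => ‖(r:ℂ)*z - w‖)).prod) := by ring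
    _ ≤ ‖F.leadingCoeff‖ * ((r + 1) ^ n * (F.roots.map (fun w => ‖(R:ℂ)*z - w‖)).prod) :=
        mul_le_mul_of_nonneg_left key hc
    _ = (r + 1) ^ n * (‖F.leadingCoeff‖ * (F.roots.map (fun w => ‖(R:ℂ)*z - w‖)).prod) := by ring

lemma claimB (P : Polynomial ℂ) (hP : P ≠ 0) (n : ℕ) (hdeg : P.natDegree = n)
    (hroots : ∀ w, P.eval w = 0 → ‖w‖ ≤ 1)
    (m : ℝ) (hmpos : 0 < m)
    (hmle : ∀ u : ℂ, ‖u‖ = 1 → m ≤ ‖P.eval u‖) :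
    m ≤ ‖P.leadingCoeff‖ ∧
      ∀ u : ℂ, 1 ≤ ‖u‖ → m * ‖u‖ ^ n ≤ ‖P.eval u‖ := by
  set c := P.leadingCoeff with hc
  set Q : Polynomial ℂ := C c * (P.roots.map (fun a => 1 - C a * X)).prod with hQ
  have hcard : Multiset.card P.roots = n := by
    rw [← hdeg]; exact splits_iff_card_roots.mp (IsAlgClosed.splits P)
  have hmemroots : ∀ a ∈ P.roots, ‖a‖ ≤ 1 := fun a ha =>
    hroots a ((mem_roots hP).mp ha)
  have hcne : c ≠ 0 := leadingCoeff_ne_zero.mpr hP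
  -- eval formula for Q
  have hQeval : ∀ v : ℂ, Q.eval v = c * (P.roots.map (fun a => 1 - a * v)).prod := by
    intro v
    rw [hQ, eval_mul, eval_C, eval_multiset_prod, Multiset.map_map]
    congr 2
    apply Multiset.map_congr rfl
    intro a _; simp
  -- eval formula for P via roots
  have hPeval : ∀ u : ℂ, P.eval u = c * (P.roots.map (fun a => u - a)).prod := by
    intro u
    conv_lhs => rw [(IsAlgClosed.splits P).eq_prod_roots]
    rw [eval_mul, eval_C, eval_multiset_prod, Multiset.map_map]
    congr 2
    apply Multiset.map_congr rfl
    intro a _; simp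
  -- Q nonzero on closed disk
  have hQne : ∀ v : ℂ, ‖v‖ ≤ 1 → Q.eval v ≠ 0 := by
    intro v hv
    rw [hQeval]
    apply mul_ne_zero hcne
    apply Multiset.prod_ne_zero
    rw [Multiset.mem_map]
    rintro ⟨a, ha, hz⟩
    have h1 : a * v = 1 := by linear_combination -hz
    have habs : ‖a‖ * ‖v‖ = 1 := by
      rw [← norm_mul, h1, norm_one]
    have ha1 : ‖a‖ = 1 := le_antisymm (hmemroots a ha)
      (by nlinarith [norm_nonneg a, norm_nonneg v, hmemroots a ha])
    have h0 : P.eval a = 0 := (mem_roots hP).mp ha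
    have h2 := hmle a ha1
    rw [h0, norm_zero] at h2
    linarith
  -- prod helper: rewrite 1 - a*v as v * (conj v - a) when |v| = 1, and (1 - a*u⁻¹)*u = u - a
  have hbd : ∀ v : ℂ, ‖v‖ = 1 → m ≤ ‖Q.eval v‖ := by
    intro v hv
    have hvv : v * (starRingEnd ℂ) v = 1 := by
      rw [Complex.mul_conj]
      norm_cast
      rw [Complex.normSq_eq_norm_sq, hv, one_pow]
    have hprod : (P.roots.map (fun a => 1 - a * v)).prod
        = v ^ (Multiset.card P.roots) * (P.roots.map (fun a => (starRingEnd ℂ) v - a)).prod := by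
      have h1 : (P.roots.map (fun a => 1 - a * v)).prod
          = (P.roots.map (fun a => v * ((starRingEnd ℂ) v - a))).prod := by
        congr 1
        apply Multiset.map_congr rfl
        intro a _
        rw [mul_sub]
        rw [hvv]
        ring
      rw [h1, Multiset.prod_map_mul]
      congr 1
      rw [Multiset.map_const', Multiset.prod_replicate]
    have habs : ‖Q.eval v‖ = ‖P.eval ((starRingEnd ℂ) v)‖ := by
      rw [hQeval, hPeval, hprod, norm_mul, norm_mul, norm_mul, norm_pow, hv, one_pow, one_mul]
    rw [habs]
    exact hmle _ (by rw [Complex.norm_conj, hv])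
  have hdisk : ∀ v : ℂ, ‖v‖ ≤ 1 → m ≤ ‖Q.eval v‖ := by
    intro v hv
    have hdc : DiffContOnCl ℂ (fun v => (Q.eval v)⁻¹) (Metric.ball (0:ℂ) 1) := by
      constructor
      · apply DifferentiableOn.inv (Q.differentiable.differentiableOn)
        intro x hx
        refine hQne x (le_of_lt ?_)
        simpa [Complex.dist_eq] using Metric.mem_ball.mp hx
      · rw [closure_ball (0:ℂ) one_ne_zero]
        apply ContinuousOn.inv₀ Q.continuous_aeval.continuousOn
        intro x hx
        refine hQne x ?_
        simpa [Complex.dist_eq] using Metric.mem_closedBall.mp hx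
    have hb : ∀ u ∈ frontier (Metric.ball (0:ℂ) 1), ‖(Q.eval u)⁻¹‖ ≤ m⁻¹ := by
      intro u hu
      rw [frontier_ball (0:ℂ) one_ne_zero] at hu
      have hu1 : ‖u‖ = 1 := by simpa [Complex.dist_eq] using hu
      rw [norm_inv]
      exact inv_anti₀ hmpos (hbd u hu1)
    have hv' : v ∈ closure (Metric.ball (0:ℂ) 1) := by
      rw [closure_ball (0:ℂ) one_ne_zero]
      simpa [Complex.dist_eq] using hv
    have hml := Complex.norm_le_of_forall_mem_frontier_norm_le Metric.isBounded_ball hdc hb hv'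
    rw [norm_inv] at hml
    have hQv : 0 < ‖Q.eval v‖ := norm_pos_iff.mpr (hQne v hv)
    have h3 := inv_anti₀ (by positivity : (0:ℝ) < (‖Q.eval v‖)⁻¹) hml
    rwa [inv_inv, inv_inv] at h3
  constructor
  · have h0 := hdisk 0 (by simp)
    have : Q.eval 0 = c := by
      rw [hQeval]
      have : (P.roots.map (fun a => 1 - a * (0:ℂ))).prod = 1 := by
        rw [Multiset.prod_eq_one]
        intro x hx
        obtain ⟨a, _, rfl⟩ := Multiset.mem_map.mp hx
        simp
      rw [this, mul_one]
    rwa [this] at h0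
  · intro u hu
    have hu0 : u ≠ 0 := by
      intro h; rw [h, norm_zero] at hu; linarith
    have hvle : ‖u⁻¹‖ ≤ 1 := by
      rw [norm_inv]
      exact inv_le_one_of_one_le₀ hu
    have hrel : P.eval u = u ^ n * Q.eval u⁻¹ := by
      rw [hQeval, hPeval]
      have h1 : (P.roots.map (fun a => u - a)).prod
          = (P.roots.map (fun a => u * (1 - a * u⁻¹))).prod := by
        congr 1
        apply Multiset.map_congr rfl
        intro a _
        field_simp
      rw [h1, Multiset.prod_map_mul, Multiset.map_const', Multiset.prod_replicate, hcard]
      ring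
    rw [hrel, norm_mul, norm_pow]
    have := hdisk u⁻¹ hvle
    have hpow : (0:ℝ) ≤ ‖u‖ ^ n := pow_nonneg (norm_nonneg u) n
    calc m * ‖u‖ ^ n ≤ ‖Q.eval u⁻¹‖ * ‖u‖ ^ n := by
          exact mul_le_mul_of_nonneg_right this hpow
      _ = ‖u‖ ^ n * ‖Q.eval u⁻¹‖ := by ring

lemma core (P : Polynomial ℂ) (n : ℕ) (hdeg : P.natDegree = n) (hn : 1 ≤ n) (hP : P ≠ 0)
    (hroots : ∀ w : ℂ, P.eval w = 0 → ‖w‖ ≤ 1)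
    (m : ℝ) (hmpos : 0 < m)
    (hmle : ∀ u : ℂ, ‖u‖ = 1 → m ≤ ‖P.eval u‖)
    (R r : ℝ) (hr : 1 ≤ r) (hRr : r < R)
    (α β : ℂ) (hα : ‖α‖ ≤ 1) (hβ : ‖β‖ < 1)
    (φ : ℂ) (hφ : φ = β * ((((R + 1) / (r + 1)) ^ n : ℝ) - ‖α‖) - α)
    (z : ℂ) (hz : 1 ≤ ‖z‖) :
    ‖(R : ℂ) ^ n + φ * (r : ℂ) ^ n‖ * ‖z‖ ^ n * m ≤
      ‖P.eval ((R : ℂ) * z) + φ * P.eval ((r : ℂ) * z)‖ := by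
  obtain ⟨hmc, hB⟩ := claimB P hP n hdeg hroots m hmpos hmle
  by_contra hcon
  push_neg at hcon
  set T : ℂ := P.eval ((R:ℂ) * z) + φ * P.eval ((r:ℂ) * z) with hT
  set D : ℂ := (R:ℂ)^n + φ*(r:ℂ)^n with hD
  have htpos : 0 < ‖D‖ * ‖z‖ ^ n * m :=
    lt_of_le_of_lt (norm_nonneg T) hcon
  have hzpos : (0:ℝ) < ‖z‖ := by linarith
  have hDne : D ≠ 0 := by
    intro h; rw [h, norm_zero, zero_mul, zero_mul] at htpos; linarith
  have hzne : z ≠ 0 := by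
    intro h; rw [h, norm_zero] at hzpos; linarith
  have hdenne : (m:ℂ) * z^n * D ≠ 0 := by
    apply mul_ne_zero (mul_ne_zero _ (pow_ne_zero n hzne)) hDne
    exact_mod_cast ne_of_gt hmpos
  set lam : ℂ := T / ((m:ℂ) * z^n * D) with hlam
  have hlam_eq : lam * ((m:ℂ) * z^n * D) = T := div_mul_cancel₀ T hdenne
  have hlamabs : ‖lam‖ < 1 := by
    rw [hlam, norm_div, norm_mul, norm_mul, norm_pow, Complex.norm_real, Real.norm_eq_abs, abs_of_pos hmpos]
    rw [div_lt_one (by nlinarith [pow_pos hzpos n, norm_pos_iff.mpr hDne])]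
    nlinarith [hcon]
  set F : Polynomial ℂ := P - C (lam * (m:ℂ)) * X^n with hF
  have hFroots : ∀ u, F.eval u = 0 → ‖u‖ ≤ 1 := by
    intro u hu
    by_contra hgt
    push_neg at hgt
    have heq : P.eval u = lam * (m:ℂ) * u^n := by
      rw [hF] at hu
      simp only [eval_sub, eval_mul, eval_C, eval_pow, eval_X] at hu
      linear_combination hu
    have h1 := hB u (le_of_lt hgt)
    rw [heq, norm_mul, norm_mul, norm_pow, Complex.norm_real, Real.norm_eq_abs, abs_of_pos hmpos] at h1
    have hupow : (0:ℝ) < ‖u‖ ^ n := pow_pos (by linarith) n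
    nlinarith [mul_pos (sub_pos.mpr hlamabs) (mul_pos hmpos hupow)]
  have hcoeff : F.coeff n = P.coeff n - lam * (m:ℂ) := by
    rw [hF, coeff_sub, coeff_C_mul, coeff_X_pow]
    simp
  have hlc : P.coeff n = P.leadingCoeff := by rw [Polynomial.leadingCoeff, hdeg]
  have hclm : ‖lam * (m:ℂ)‖ < m := by
    rw [norm_mul, Complex.norm_real, Real.norm_eq_abs, abs_of_pos hmpos]
    nlinarith [norm_nonneg lam]
  have hcoeffne : F.coeff n ≠ 0 := by
    rw [hcoeff, hlc]
    intro h
    have h2 : ‖P.leadingCoeff‖ = ‖lam * (m:ℂ)‖ := by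
      rw [sub_eq_zero] at h; rw [h]
    linarith
  have hFne : F ≠ 0 := fun h => hcoeffne (by rw [h, coeff_zero])
  have hFdeg : F.natDegree = n := by
    apply le_antisymm
    · refine (natDegree_sub_le _ _).trans ?_
      simp only [hdeg, max_le_iff, le_refl, true_and]
      exact (natDegree_C_mul_le _ _).trans (by simp)
    · exact le_natDegree_of_ne_zero hcoeffne
  have hA := claimA F n hFdeg hFne hFroots R r hr (le_of_lt hRr) z hz
  set Bv : ℂ := F.eval ((r:ℂ)*z) with hBv
  set Av : ℂ := F.eval ((R:ℂ)*z) with hAv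
  have hAne : Av ≠ 0 := by
    intro h
    have h2 := hFroots ((R:ℂ)*z) (by rw [← hAv]; exact h)
    rw [norm_mul, Complex.norm_real, Real.norm_eq_abs, abs_of_pos (by linarith : (0:ℝ) < R)] at h2
    nlinarith
  have hid : Av + φ * Bv = 0 := by
    have h3 : Av + φ * Bv = T - lam * ((m:ℂ) * z^n * D) := by
      rw [hAv, hBv, hF, hT, hD]
      simp only [eval_sub, eval_mul, eval_C, eval_pow, eval_X]
      ring_nf
    rw [h3, hlam_eq, sub_self]
  have hAB : Av = -(φ * Bv) := by linear_combination hid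
  -- bound on |φ|
  have hrpos : (0:ℝ) < r + 1 := by linarith
  have hratio : (1:ℝ) < (R+1)/(r+1) := by
    rw [lt_div_iff₀ hrpos]; linarith
  have hkn : (1:ℝ) < ((R+1)/(r+1))^n := one_lt_pow₀ hratio (by omega)
  have hφle : ‖φ‖ ≤ ‖β‖ * (((R+1)/(r+1))^n - ‖α‖) + ‖α‖ := by
    rw [hφ, sub_eq_add_neg]
    refine (norm_add_le _ _).trans ?_
    rw [norm_neg, norm_mul]
    have h7 : ‖((((R + 1) / (r + 1)) ^ n : ℝ) : ℂ) - (‖α‖ : ℂ)‖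
        = ((R+1)/(r+1))^n - ‖α‖ := by
      rw [← Complex.ofReal_sub, Complex.norm_real, Real.norm_eq_abs]
      exact abs_of_nonneg (by linarith)
    rw [h7]
  have hφlt : ‖φ‖ < ((R+1)/(r+1))^n := by
    have h4 : ‖β‖ * (((R+1)/(r+1))^n - ‖α‖) <
        ((R+1)/(r+1))^n - ‖α‖ := by
      apply mul_lt_of_lt_one_left (by linarith) hβ
    linarith
  have hφmul : ‖φ‖ * (r+1)^n < (R+1)^n := by
    have h5 : ((R+1)/(r+1))^n * (r+1)^n = (R+1)^n := by
      rw [div_pow]; field_simp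
    nlinarith [pow_pos hrpos n, norm_nonneg φ]
  rcases eq_or_ne Bv 0 with hB0 | hB0
  · exact hAne (by rw [hAB, hB0, mul_zero, neg_zero])
  · have hBpos : 0 < ‖Bv‖ := norm_pos_iff.mpr hB0
    have h6 : ‖Av‖ = ‖φ‖ * ‖Bv‖ := by
      rw [hAB, norm_neg, norm_mul]
    rw [h6] at hA
    nlinarith [pow_pos hrpos n, pow_pos (by linarith : (0:ℝ) < R + 1) n]

theorem stmt_16 (P : Polynomial ℂ) (n : ℕ) (hdeg : P.natDegree = n)
    (hroots : ∀ w : ℂ, P.eval w = 0 → ‖w‖ ≤ 1)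
    (m : ℝ)
    (hm : IsLeast ((fun z : ℂ => ‖P.eval z‖) '' {z : ℂ | ‖z‖ = 1}) m)
    (R r : ℝ) (hr : 1 ≤ r) (hRr : r < R)
    (α β : ℂ) (hα : ‖α‖ ≤ 1) (hβ : ‖β‖ ≤ 1)
    (φ : ℂ) (hφ : φ = β * ((((R + 1) / (r + 1)) ^ n : ℝ) - ‖α‖) - α) :
    ∀ z : ℂ, 1 ≤ ‖z‖ →
      ‖(R : ℂ) ^ n + φ * (r : ℂ) ^ n‖ * ‖z‖ ^ n * m ≤
        ‖P.eval ((R : ℂ) * z) + φ * P.eval ((r : ℂ) * z)‖ := by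
  intro z hz
  obtain ⟨⟨z0, hz0mem, hz0e⟩, hlb⟩ := hm
  have hm0 : 0 ≤ m := hz0e ▸ norm_nonneg _
  rcases eq_or_lt_of_le hm0 with hm0' | hmpos
  · rw [← hm0', mul_zero]
    exact norm_nonneg _
  have hmle : ∀ u : ℂ, ‖u‖ = 1 → m ≤ ‖P.eval u‖ := fun u hu =>
    hlb ⟨u, hu, rfl⟩
  have hP : P ≠ 0 := by
    intro h
    rw [h] at hz0e
    simp at hz0e
    linarith
  rcases Nat.eq_zero_or_pos n with hn0 | hn
  · -- n = 0 : P is a constant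
    subst hn0
    have hPc : P = C (P.coeff 0) := eq_C_of_natDegree_eq_zero hdeg
    have hm1 : m ≤ ‖P.coeff 0‖ := by
      have h1 := hmle 1 (by simp)
      rwa [hPc, eval_C] at h1
    rw [hPc]
    simp only [eval_C, pow_zero, mul_one, one_mul]
    calc ‖1 + φ‖ * m ≤ ‖1 + φ‖ * ‖P.coeff 0‖ :=
          mul_le_mul_of_nonneg_left hm1 (norm_nonneg _)
      _ = ‖P.coeff 0 + φ * P.coeff 0‖ := by
          rw [← norm_mul]; ring_nf
  · -- n ≥ 1 : limit argument in β
    set K : ℂ := ((((R + 1) / (r + 1)) ^ n : ℝ) : ℂ) - (‖α‖ : ℂ) with hK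
    set f1 : ℝ → ℝ := fun s =>
      ‖(R : ℂ) ^ n + ((s:ℂ) * β * K - α) * (r : ℂ) ^ n‖ * ‖z‖ ^ n * m
      with hf1
    set f2 : ℝ → ℝ := fun s =>
      ‖P.eval ((R : ℂ) * z) + ((s:ℂ) * β * K - α) * P.eval ((r : ℂ) * z)‖ with hf2
    have hcont1 : Continuous f1 := by
      apply Continuous.mul (Continuous.mul _ continuous_const) continuous_const
      exact continuous_norm.comp (by continuity)
    have hcont2 : Continuous f2 := by
      exact continuous_norm.comp (by continuity)
    have hle : ∀ s ∈ Set.Ico (0:ℝ) 1, f1 s ≤ f2 s := by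
      intro s hs
      obtain ⟨hs0, hs1⟩ := hs
      have hβs : ‖(s:ℂ) * β‖ < 1 := by
        rw [norm_mul, Complex.norm_real, Real.norm_eq_abs, _root_.abs_of_nonneg hs0]
        nlinarith [norm_nonneg β]
      exact core P n hdeg hn hP hroots m hmpos hmle R r hr hRr α ((s:ℂ) * β) hα hβs
        ((s:ℂ) * β * K - α) rfl z hz
    haveI hNB : Filter.NeBot (nhdsWithin (1:ℝ) (Set.Ico 0 1)) := by
      rw [← mem_closure_iff_nhdsWithin_neBot, closure_Ico (by norm_num : (0:ℝ) ≠ 1)]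
      constructor <;> norm_num
    have ht1 : Filter.Tendsto f1 (nhdsWithin (1:ℝ) (Set.Ico 0 1)) (nhds (f1 1)) :=
      (hcont1.continuousAt).tendsto.mono_left nhdsWithin_le_nhds
    have ht2 : Filter.Tendsto f2 (nhdsWithin (1:ℝ) (Set.Ico 0 1)) (nhds (f2 1)) :=
      (hcont2.continuousAt).tendsto.mono_left nhdsWithin_le_nhds
    have hfin : f1 1 ≤ f2 1 := by
      refine le_of_tendsto_of_tendsto ht1 ht2 ?_
      filter_upwards [self_mem_nhdsWithin] with s hs using hle s hs
    have hφ1 : ((1:ℝ):ℂ) * β * K - α = φ := by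
      rw [hφ, hK]; push_cast; ring
    rw [hf1, hf2] at hfin
    simp only [hφ1] at hfin
    exact hfin
end
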